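/- Let n ∈ ℕ and let a_i > 0 and b_i > 0 for 1 ≤ i ≤ n. For each multi-index k = (k_1,…,k_n) ∈ ℕ_0^n define e_k : [0,∞)^n → ℂ by e_k(t_1,…,t_n) := exp(−(a_1 + k_1 b_1)t_1 − ⋯ − (a_n + k_n b_n)t_n). Then the closed linear span of the set {e_k : k ∈ ℕ_0^n} equals all of L^1([0,∞)^n), i.e., this set is total in L^1([0,∞)^n). -/

import Mathlib

open MeasureTheory Filter Set

noncomputable section

/-- Partial Laplace integral of `f : [0,∞) → ℂ` at `l` up to time `t`. -/
def lapPartial (f : ℝ → ℂ) (l : ℂ) (t : ℝ) : ℂ :=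
  ∫ s in Set.Ioc (0:ℝ) t, Complex.exp (-(l * s)) * f s

/-- The Laplace transform of `f` at `l` exists and equals `F`. -/
def HasLaplace (f : ℝ → ℂ) (l : ℂ) (F : ℂ) : Prop :=
  Filter.Tendsto (lapPartial f l) Filter.atTop (nhds F)

/-- The abscissa of convergence of the Laplace transform of `f`, as an extended real. -/
def laplaceAbs (f : ℝ → ℂ) : EReal :=
  sInf {x : EReal | ∃ ω : ℝ, x = (ω : EReal) ∧ ∀ l : ℂ, ω < l.re → ∃ F, HasLaplace f l F}

/-- `lam` is a uniqueness sequence for the one-dimensional Laplace transform. -/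
def IsUniquenessSeq (lam : ℕ → ℂ) : Prop :=
  ∀ f : ℝ → ℂ, MeasureTheory.LocallyIntegrableOn f (Set.Ici 0) →
    (∀ k, laplaceAbs f < (((lam k).re : ℝ) : EReal)) →
    (∀ k, HasLaplace f (lam k) 0) →
    ∀ᵐ t : ℝ, 0 ≤ t → f t = 0

/-- Partial `n`-dimensional Laplace integral of `f : [0,∞)^n → ℂ` at `l` over the box `[0,t]`. -/
def mLapPartial (n : ℕ) (f : (Fin n → ℝ) → ℂ) (l : Fin n → ℂ) (t : Fin n → ℝ) : ℂ :=
  ∫ s in Set.pi Set.univ (fun i => Set.Ioc (0:ℝ) (t i)),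
    Complex.exp (-(∑ i, l i * (s i))) * f s

/-- The `n`-dimensional Laplace transform of `f` at `l` exists (as the iterated limit
`t₁ → ∞, …, tₙ → ∞` of the partial integrals) and equals `F`. -/
def HasMLaplace (n : ℕ) (f : (Fin n → ℝ) → ℂ) (l : Fin n → ℂ) (F : ℂ) : Prop :=
  Filter.Tendsto (mLapPartial n f l) Filter.atTop (nhds F)

/-- `Ω(f)`: the region of convergence of the `n`-dimensional Laplace integral. -/
def mOmega (n : ℕ) (f : (Fin n → ℝ) → ℂ) : Set (Fin n → ℂ) :=
  {l | ∃ F, HasMLaplace n f l F}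

/-- `Ω_b(f)`: the set of `l` for which the partial Laplace integrals are bounded. -/
def mOmegaB (n : ℕ) (f : (Fin n → ℝ) → ℂ) : Set (Fin n → ℂ) :=
  {l | Bornology.IsBounded (mLapPartial n f l '' {t | ∀ i, 0 ≤ t i})}

/-- A countable family `lam : K → ℂⁿ` is a uniqueness sequence for the `n`-dimensional
Laplace transform. -/
def IsMUniquenessFamily (n : ℕ) {K : Type} [Countable K] (lam : K → Fin n → ℂ) : Prop :=
  ∀ f : (Fin n → ℝ) → ℂ,
    MeasureTheory.LocallyIntegrableOn f {t | ∀ i, 0 ≤ t i} →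
    (∃ ω : Fin n → EReal, (∀ j, ω j ≠ ⊤) ∧
      {l : Fin n → ℂ | ∀ j, ω j < (((l j).re : ℝ) : EReal)} ⊆ mOmegaB n f ∩ mOmega n f ∧
      ∀ k j, ω j < ((((lam k j).re : ℝ)) : EReal)) →
    (∀ k, HasMLaplace n f (lam k) 0) →
    ∀ᵐ t : Fin n → ℝ, (∀ i, 0 ≤ t i) → f t = 0

namespace Stmt4Aux


variable {n : ℕ}

abbrev XX (n : ℕ) := ↥(Set.Icc (0 : Fin n → ℝ) 1)

instance : CompactSpace (XX n) := isCompact_iff_compactSpace.mp isCompact_Icc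

def cc (i : Fin n) : C(XX n, ℂ) :=
  ⟨fun x => ((x.1 i : ℝ) : ℂ),
    Complex.continuous_ofReal.comp ((continuous_apply i).comp continuous_subtype_val)⟩

def mon (k : Fin n → ℕ) : C(XX n, ℂ) := ∏ i, (cc i) ^ (k i)

lemma star_cc (i : Fin n) : star (cc i) = cc i := by
  ext x; simp [cc]

lemma mon_mul (k m : Fin n → ℕ) : mon k * mon m = mon (k + m) := by
  simp [mon, ← Finset.prod_mul_distrib, pow_add]

lemma mon_zero : mon (0 : Fin n → ℕ) = 1 := by simp [mon]

lemma star_mon (k : Fin n → ℕ) : star (mon k) = mon k := by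
  simp [mon, star_prod, star_pow, star_cc]

lemma cc_mem_span (i : Fin n) :
    cc i ∈ Submodule.span ℂ (Set.range (mon (n := n))) := by
  have : cc i = mon (Pi.single i 1) := by
    simp [mon]
    rw [Finset.prod_eq_single i] <;> intros <;> simp_all [Pi.single_apply]
  rw [this]
  exact Submodule.subset_span (Set.mem_range_self _)

lemma mem_span_mul {x y : C(XX n, ℂ)}
    (hx : x ∈ Submodule.span ℂ (Set.range (mon (n := n))))
    (hy : y ∈ Submodule.span ℂ (Set.range (mon (n := n)))) :
    x * y ∈ Submodule.span ℂ (Set.range (mon (n := n))) := by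
  induction hx using Submodule.span_induction with
  | mem x hxm =>
    obtain ⟨k, rfl⟩ := hxm
    induction hy using Submodule.span_induction with
    | mem y hym => obtain ⟨m, rfl⟩ := hym; rw [mon_mul];
                   exact Submodule.subset_span (Set.mem_range_self _)
    | zero => simp
    | add y z _ _ h1 h2 => rw [mul_add]; exact Submodule.add_mem _ h1 h2
    | smul c y _ h1 => rw [mul_smul_comm]; exact Submodule.smul_mem _ _ h1
  | zero => simp
  | add x z _ _ h1 h2 => rw [add_mul]; exact Submodule.add_mem _ h1 h2
  | smul c x _ h1 => rw [smul_mul_assoc]; exact Submodule.smul_mem _ _ h1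

lemma star_mem_span {x : C(XX n, ℂ)}
    (hx : x ∈ Submodule.span ℂ (Set.range (mon (n := n)))) :
    star x ∈ Submodule.span ℂ (Set.range (mon (n := n))) := by
  induction hx using Submodule.span_induction with
  | mem x hxm => obtain ⟨k, rfl⟩ := hxm; rw [star_mon];
                 exact Submodule.subset_span (Set.mem_range_self _)
  | zero => simp
  | add x y _ _ h1 h2 => rw [star_add]; exact Submodule.add_mem _ h1 h2
  | smul c x _ h1 => rw [star_smul]; exact Submodule.smul_mem _ _ h1

lemma adjoin_le_span {H : C(XX n, ℂ)}
    (h : H ∈ StarAlgebra.adjoin ℂ (Set.range (cc (n := n)))) :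
    H ∈ Submodule.span ℂ (Set.range (mon (n := n))) := by
  induction h using StarAlgebra.adjoin_induction with
  | mem x hx => obtain ⟨i, rfl⟩ := hx; exact cc_mem_span i
  | algebraMap r =>
    have : (algebraMap ℂ C(XX n, ℂ)) r = r • mon 0 := by simp [mon_zero, Algebra.algebraMap_eq_smul_one]
    rw [this]
    exact Submodule.smul_mem _ _ (Submodule.subset_span (Set.mem_range_self _))
  | add x y _ _ h1 h2 => exact Submodule.add_mem _ h1 h2
  | mul x y _ _ h1 h2 => exact mem_span_mul h1 h2
  | star x _ h1 => exact star_mem_span h1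

lemma closure_adjoin_eq_univ :
    closure ((StarAlgebra.adjoin ℂ (Set.range (cc (n := n))) : StarSubalgebra ℂ C(XX n, ℂ)) :
      Set C(XX n, ℂ)) = Set.univ := by
  have h := ContinuousMap.starSubalgebra_topologicalClosure_eq_top_of_separatesPoints
    (StarAlgebra.adjoin ℂ (Set.range (cc (n := n)))) ?_
  · have := congrArg (fun (A : StarSubalgebra ℂ C(XX n, ℂ)) => (A : Set C(XX n, ℂ))) h
    simpa [StarSubalgebra.topologicalClosure_coe] using this
  · intro x y hxy
    have : ∃ i, x.1 i ≠ y.1 i := by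
      by_contra hc
      push_neg at hc
      exact hxy (Subtype.ext (funext hc))
    obtain ⟨i, hi⟩ := this
    refine ⟨_, ⟨cc i, StarAlgebra.subset_adjoin ℂ _ (Set.mem_range_self i), rfl⟩, ?_⟩
    simp [cc]
    exact_mod_cast hi


lemma mon_apply (k : Fin n → ℕ) (x : XX n) :
    mon k x = ∏ i, ((x.1 i : ℝ) : ℂ) ^ (k i) := by
  simp [mon, cc]


variable (a b : Fin n → ℝ)

/-- The map `t ↦ (exp (-(bᵢ * max tᵢ 0)))ᵢ` into the cube. -/
def psi (hb : ∀ i, 0 < b i) (t : Fin n → ℝ) : XX n :=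
  ⟨fun i => Real.exp (-(b i * max (t i) 0)),
    ⟨fun i => (Real.exp_pos _).le,
     fun i => Real.exp_le_one_iff.mpr (by
       have : 0 ≤ b i * max (t i) 0 := mul_nonneg (hb i).le (le_max_right _ _)
       linarith)⟩⟩

lemma continuous_psi (hb : ∀ i, 0 < b i) : Continuous (psi b hb) := by
  refine Continuous.subtype_mk ?_ _
  exact continuous_pi fun i => Real.continuous_exp.comp
    ((continuous_const.mul ((continuous_apply i).max continuous_const)).neg)

def Wfun (t : Fin n → ℝ) : ℝ := Real.exp (-(∑ i, a i * max (t i) 0))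

lemma continuous_Wfun : Continuous (Wfun a) := by
  exact Real.continuous_exp.comp ((continuous_finset_sum _ fun i _ =>
    continuous_const.mul ((continuous_apply i).max continuous_const)).neg)

lemma Wfun_nonneg (t : Fin n → ℝ) : 0 ≤ Wfun a t := (Real.exp_pos _).le

def QQ (n : ℕ) : Set (Fin n → ℝ) := {t | ∀ i, 0 ≤ t i}

lemma QQ_eq : QQ n = Set.pi Set.univ (fun _ => Set.Ici (0:ℝ)) := by
  ext t; simp [QQ, Pi.le_def]

lemma isClosed_QQ : IsClosed (QQ n) := by
  rw [QQ_eq]; exact isClosed_set_pi fun i _ => isClosed_Ici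

lemma integrable_W (ha : ∀ i, 0 < a i) :
    Integrable (Wfun a) (volume.restrict (QQ n)) := by
  show IntegrableOn (Wfun a) (QQ n) volume
  rw [← integrable_indicator_iff isClosed_QQ.measurableSet]
  have heq : (QQ n).indicator (Wfun a) =
      fun t => ∏ i, (Set.Ici (0:ℝ)).indicator (fun s => Real.exp (-(a i * s))) (t i) := by
    funext t
    by_cases ht : t ∈ QQ n
    · rw [Set.indicator_of_mem ht]
      have : ∀ i, (Set.Ici (0:ℝ)).indicator (fun s => Real.exp (-(a i * s))) (t i)
          = Real.exp (-(a i * t i)) := fun i => Set.indicator_of_mem (ht i) _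
      simp only [this, Wfun, ← Real.exp_sum, ← Finset.sum_neg_distrib]
      congr 1
      refine Finset.sum_congr rfl fun i _ => ?_
      rw [max_eq_left (ht i)]
    · rw [Set.indicator_of_notMem ht]
      simp only [QQ, Set.mem_setOf_eq, not_forall] at ht
      obtain ⟨i, hi⟩ := ht
      rw [eq_comm]
      refine Finset.prod_eq_zero (Finset.mem_univ i) ?_
      rw [Set.indicator_of_notMem (by simpa using hi)]
  rw [heq]
  refine Integrable.fintype_prod (𝕜 := ℝ) fun i => ?_
  rw [integrable_indicator_iff measurableSet_Ici]
  rw [integrableOn_Ici_iff_integrableOn_Ioi]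
  simpa [neg_mul, mul_comm] using exp_neg_integrableOn_Ioi 0 (ha i)

lemma memLp_u (ha : ∀ i, 0 < a i) (hb : ∀ i, 0 < b i) (H : C(XX n, ℂ)) :
    MemLp (fun t => H (psi b hb t) * (Wfun a t : ℂ)) 1 (volume.restrict (QQ n)) := by
  rw [memLp_one_iff_integrable]
  refine Integrable.mono' (g := fun t => ‖H‖ * Wfun a t)
    ((integrable_W a ha).const_mul _) ?_ ?_
  · exact ((H.continuous.comp (continuous_psi b hb)).mul
      (Complex.continuous_ofReal.comp (continuous_Wfun a))).aestronglyMeasurable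
  · refine Filter.Eventually.of_forall fun t => ?_
    rw [norm_mul, Complex.norm_real, Real.norm_of_nonneg (Wfun_nonneg a t)]
    exact mul_le_mul_of_nonneg_right (H.norm_coe_le_norm _) (Wfun_nonneg a t)



/-- Construction of the continuous function `H` on the cube with `H (ψ t) * W t = g t`. -/
lemma exists_H (ha : ∀ i, 0 < a i) (hb : ∀ i, 0 < b i) {g : (Fin n → ℝ) → ℂ}
    (hgc : Continuous g) (hgs : HasCompactSupport g) :
    ∃ H : C(XX n, ℂ), ∀ t ∈ QQ n, (H (psi b hb t) : ℂ) * (Wfun a t : ℂ) = g t := by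
  obtain ⟨R, hR0, hsupp⟩ := hgs.isBounded.subset_closedBall_lt 0 0
  set q : Fin n → ℝ := fun i => -(a i / b i) with hq
  have hqne : ∀ i, q i ≠ 0 := fun i =>
    neg_ne_zero.mpr (div_pos (ha i) (hb i)).ne'
  set τ : (Fin n → ℝ) → (Fin n → ℝ) := fun x i => -Real.log (x i) / b i with hτ
  set Hfun : (Fin n → ℝ) → ℂ :=
    fun x => g (τ x) * ∏ i, (((x i ^ q i : ℝ)) : ℂ) with hH
  -- vanishing of g outside the ball
  have hg0 : ∀ y : Fin n → ℝ, (∃ i, R < |y i|) → g y = 0 := by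
    intro y ⟨i, hi⟩
    apply image_eq_zero_of_notMem_tsupport
    intro hmem
    have := hsupp hmem
    rw [Metric.mem_closedBall] at this
    have h2 := (dist_pi_le_iff (by positivity)).mp this i
    simp only [Pi.zero_apply, Real.dist_eq, sub_zero] at h2
    linarith
  -- Hfun vanishes near small coordinates
  have hzero : ∀ (i : Fin n) (y : Fin n → ℝ), 0 ≤ y i → y i < Real.exp (-(b i * R)) →
      Hfun y = 0 := by
    intro i y hy0 hylt
    rcases eq_or_lt_of_le hy0 with h0 | h0
    · have : ((y i ^ q i : ℝ) : ℂ) = 0 := by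
        rw [← h0, Real.zero_rpow (hqne i)]; simp
      rw [hH]
      simp only
      rw [Finset.prod_eq_zero (Finset.mem_univ i) this, mul_zero]
    · have hlog : Real.log (y i) < -(b i * R) := by
        calc Real.log (y i) < Real.log (Real.exp (-(b i * R))) := Real.log_lt_log h0 hylt
        _ = -(b i * R) := Real.log_exp _
      have hti : R < τ y i := by
        rw [hτ]
        simp only
        rw [lt_div_iff₀ (hb i)]
        nlinarith
      have : g (τ y) = 0 := hg0 _ ⟨i, lt_of_lt_of_le hti (le_abs_self _)⟩
      rw [hH]; simp only [this, zero_mul]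
  -- continuity
  have hcont : ContinuousOn Hfun (Set.Icc 0 1) := by
    intro x hx
    by_cases hpos : ∀ i, 0 < x i
    · apply ContinuousAt.continuousWithinAt
      apply ContinuousAt.mul
      · apply hgc.continuousAt.comp
        apply continuousAt_pi.mpr
        intro i
        exact ((ContinuousAt.comp (f := fun p : Fin n → ℝ => p i)
          (Real.continuousAt_log (hpos i).ne')
          (continuous_apply i).continuousAt).neg.div_const (b i))
      · exact tendsto_finset_prod _ fun i _ =>
          (Complex.continuous_ofReal.continuousAt.comp
            (ContinuousAt.comp (f := fun p : Fin n → ℝ => p i)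
              (Real.continuousAt_rpow_const (x i) (q i) (Or.inl (hpos i).ne'))
              (continuous_apply i).continuousAt))
    · push_neg at hpos
      obtain ⟨i, hi⟩ := hpos
      have hxi : x i = 0 := le_antisymm hi (hx.1 i)
      have hV : IsOpen {y : Fin n → ℝ | y i < Real.exp (-(b i * R))} :=
        isOpen_lt (continuous_apply i) continuous_const
      have hxV : x ∈ {y : Fin n → ℝ | y i < Real.exp (-(b i * R))} := by
        simp only [Set.mem_setOf_eq, hxi]; exact Real.exp_pos _
      refine (continuousWithinAt_const (b := (0:ℂ))).congr_of_eventuallyEq ?_ ?_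
      · filter_upwards [nhdsWithin_le_nhds (hV.mem_nhds hxV), self_mem_nhdsWithin]
          with y hyV hyIcc
        exact hzero i y (hyIcc.1 i) hyV
      · exact hzero i x (hx.1 i) hxV
  refine ⟨⟨(Set.Icc 0 1).restrict Hfun, hcont.restrict⟩, ?_⟩
  intro t ht
  have hmax : ∀ i, max (t i) 0 = t i := fun i => max_eq_left (ht i)
  have hψ : ∀ i, ((psi b hb t : Fin n → ℝ)) i = Real.exp (-(b i * t i)) := by
    intro i; simp only [psi, hmax]
  show Hfun (psi b hb t : Fin n → ℝ) * (Wfun a t : ℂ) = g t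
  have hτψ : τ (psi b hb t : Fin n → ℝ) = t := by
    funext i
    rw [hτ]; simp only
    rw [hψ i, Real.log_exp, neg_neg, mul_comm, mul_div_assoc, div_self (hb i).ne', mul_one]
  have hprod : ∀ i, (((psi b hb t : Fin n → ℝ) i) ^ q i : ℝ) = Real.exp (a i * t i) := by
    intro i
    rw [hψ i, ← Real.exp_log (x := Real.exp (-(b i * t i)) ^ q i)
        (Real.rpow_pos_of_pos (Real.exp_pos _) _),
      Real.log_rpow (Real.exp_pos _), Real.log_exp]
    congr 1
    rw [hq]
    field_simp [(hb i).ne']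
  rw [hH]
  simp only [hτψ, hprod]
  have : (∏ i, ((Real.exp (a i * t i) : ℝ) : ℂ)) * ((Wfun a t : ℝ) : ℂ) = 1 := by
    rw [← Complex.ofReal_prod, ← Complex.ofReal_mul, ← Real.exp_sum, Wfun]
    rw [← Real.exp_add]
    norm_cast
    rw [show (∑ i, a i * t i) + -(∑ i, a i * max (t i) 0) = 0 by
      simp only [hmax]; ring, Real.exp_zero]
  rw [mul_assoc, this, mul_one]


lemma u_mon (hb : ∀ i, 0 < b i) (k : Fin n → ℕ) (t : Fin n → ℝ) (ht : t ∈ QQ n) :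
    (mon k) (psi b hb t) * (Wfun a t : ℂ) =
      Complex.exp (-(∑ i, (((a i + (k i : ℝ) * b i : ℝ)) : ℂ) * ((t i : ℝ) : ℂ))) := by
  have hmax : ∀ i, max (t i) 0 = t i := fun i => max_eq_left (ht i)
  rw [mon_apply]
  have h1 : ∀ i, ((((psi b hb t) : Fin n → ℝ) i : ℝ) : ℂ) ^ (k i)
      = Complex.exp ((k i : ℂ) * ((-(b i * t i) : ℝ) : ℂ)) := by
    intro i
    rw [show (((psi b hb t) : Fin n → ℝ) i) = Real.exp (-(b i * t i)) by
      simp only [psi, hmax]]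
    rw [Complex.ofReal_exp, ← Complex.exp_nat_mul]
  simp only [h1]
  rw [← Complex.exp_sum]
  rw [show (Wfun a t : ℂ) = Complex.exp ((-(∑ i, a i * t i) : ℝ) : ℂ) by
    rw [Wfun]; simp only [hmax]; rw [Complex.ofReal_exp]]
  rw [← Complex.exp_add]
  congr 1
  push_cast
  rw [← Finset.sum_neg_distrib, ← Finset.sum_neg_distrib, ← Finset.sum_add_distrib]
  exact Finset.sum_congr rfl fun i _ => by ring


lemma memLp_u' (ha : ∀ i, 0 < a i) (hb : ∀ i, 0 < b i) (H : C(XX n, ℂ)) :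
    MemLp (fun t => (H (psi b hb t) : ℂ) * (Wfun a t : ℂ)) 1
      (volume.restrict {t : Fin n → ℝ | ∀ i, 0 ≤ t i}) :=
  memLp_u a b ha hb H

end Stmt4Aux

open Stmt4Aux in
theorem stmt4 (n : ℕ) (a b : Fin n → ℝ) (ha : ∀ i, 0 < a i) (hb : ∀ i, 0 < b i)
    (E : (Fin n → ℕ) → MeasureTheory.Lp ℂ 1
      (MeasureTheory.volume.restrict {t : Fin n → ℝ | ∀ i, 0 ≤ t i}))
    (hE : ∀ k : Fin n → ℕ, (E k : (Fin n → ℝ) → ℂ)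
        =ᵐ[MeasureTheory.volume.restrict {t : Fin n → ℝ | ∀ i, 0 ≤ t i}]
      fun t => Complex.exp (-(∑ i, (((a i + (k i : ℝ) * b i : ℝ)) : ℂ) * ((t i : ℝ) : ℂ)))) :
    (Submodule.span ℂ (Set.range E)).topologicalClosure = ⊤ := by
  classical
  set T : C(XX n, ℂ) →
      Lp ℂ 1 (volume.restrict {t : Fin n → ℝ | ∀ i, 0 ≤ t i}) :=
    fun H => (memLp_u' a b ha hb H).toLp _ with hTdef
  have hae : ∀ᵐ t ∂(volume.restrict {t : Fin n → ℝ | ∀ i, 0 ≤ t i}), t ∈ QQ n :=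
    ae_restrict_mem isClosed_QQ.measurableSet
  -- T sends monomials to the E k
  have hTmon : ∀ k, T (mon k) = E k := by
    intro k
    rw [hTdef]
    simp only
    rw [← MeasureTheory.Lp.toLp_coeFn (E k) (Lp.memLp (E k))]
    apply MemLp.toLp_congr
    filter_upwards [hae, hE k] with t ht hEk
    rw [hEk]
    exact u_mon a b hb k t ht
  -- T maps the span of monomials into the closed span S of the E k
  have hTspan : ∀ H ∈ Submodule.span ℂ (Set.range (mon (n := n))),
      T H ∈ (Submodule.span ℂ (Set.range E)).topologicalClosure := by
    intro H hH
    induction hH using Submodule.span_induction with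
    | mem x hx =>
      obtain ⟨k, rfl⟩ := hx
      rw [hTmon k]
      exact (Submodule.le_topologicalClosure _) (Submodule.subset_span (Set.mem_range_self k))
    | zero =>
      have hz : T 0 = 0 := by
        rw [hTdef]
        simp only
        rw [MemLp.toLp_congr _ (MemLp.zero (ε := ℂ)) (Filter.Eventually.of_forall fun t => by simp)]
        exact MemLp.toLp_zero _
      rw [hz]; exact Submodule.zero_mem _
    | add x y hx hy h1 h2 =>
      have hadd : T (x + y) = T x + T y := by
        rw [hTdef]
        simp only
        rw [MemLp.toLp_congr _ ((memLp_u' a b ha hb x).add (memLp_u' a b ha hb y))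
          (Filter.Eventually.of_forall fun t => by
            simp only [ContinuousMap.add_apply, Pi.add_apply]; ring)]
        exact MemLp.toLp_add _ _
      rw [hadd]; exact Submodule.add_mem _ h1 h2
    | smul r x hx h1 =>
      have hsmul : T (r • x) = r • T x := by
        rw [hTdef]
        simp only
        rw [MemLp.toLp_congr _ ((memLp_u' a b ha hb x).const_smul r)
          (Filter.Eventually.of_forall fun t => by
            simp only [ContinuousMap.smul_apply, Pi.smul_apply, smul_eq_mul]; ring)]
        exact MemLp.toLp_const_smul _ _
      rw [hsmul]; exact Submodule.smul_mem _ _ h1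
  -- T is Lipschitz, hence continuous
  have hWlt : eLpNorm (Wfun a) 1 (volume.restrict {t : Fin n → ℝ | ∀ i, 0 ≤ t i}) < ⊤ :=
    (memLp_one_iff_integrable.mpr (integrable_W a ha)).2
  have hTcont : Continuous T := by
    apply LipschitzWith.continuous
      (K := (eLpNorm (Wfun a) 1 (volume.restrict {t : Fin n → ℝ | ∀ i, 0 ≤ t i})).toReal.toNNReal)
    apply LipschitzWith.of_dist_le_mul
    intro H₁ H₂
    rw [dist_eq_norm, hTdef]
    simp only
    have hsub : (memLp_u' a b ha hb H₁).toLp _ - (memLp_u' a b ha hb H₂).toLp _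
        = ((memLp_u' a b ha hb H₁).sub (memLp_u' a b ha hb H₂)).toLp
            ((fun t => (H₁ (psi b hb t) : ℂ) * (Wfun a t : ℂ)) -
             (fun t => (H₂ (psi b hb t) : ℂ) * (Wfun a t : ℂ))) :=
      (MemLp.toLp_sub _ _).symm
    rw [hsub, MeasureTheory.Lp.norm_toLp]
    have hbound : eLpNorm
        ((fun t => (H₁ (psi b hb t) : ℂ) * (Wfun a t : ℂ)) -
         (fun t => (H₂ (psi b hb t) : ℂ) * (Wfun a t : ℂ))) 1
          (volume.restrict {t : Fin n → ℝ | ∀ i, 0 ≤ t i})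
        ≤ eLpNorm ((‖H₁ - H₂‖ : ℝ) • (Wfun a)) 1
            (volume.restrict {t : Fin n → ℝ | ∀ i, 0 ≤ t i}) := by
      apply eLpNorm_mono_real
      intro t
      simp only [Pi.sub_apply, Pi.smul_apply, smul_eq_mul]
      rw [← sub_mul, norm_mul, Complex.norm_real, Real.norm_of_nonneg (Wfun_nonneg a t)]
      have h1 : ‖H₁ (psi b hb t) - H₂ (psi b hb t)‖ ≤ ‖H₁ - H₂‖ :=
        (H₁ - H₂).norm_coe_le_norm (psi b hb t)
      exact mul_le_mul_of_nonneg_right h1 (Wfun_nonneg a t)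
    rw [eLpNorm_const_smul] at hbound
    refine le_trans (ENNReal.toReal_mono (ENNReal.mul_ne_top ENNReal.coe_ne_top hWlt.ne) hbound) ?_
    rw [ENNReal.toReal_mul]
    rw [dist_eq_norm, Real.coe_toNNReal _ ENNReal.toReal_nonneg]
    simp only [coe_nnnorm, Real.norm_eq_abs, abs_norm, ENNReal.coe_toReal]
    rw [mul_comm]
  -- every T H is in the closed span
  have hTall : ∀ H : C(XX n, ℂ),
      T H ∈ (Submodule.span ℂ (Set.range E)).topologicalClosure := by
    intro H
    have hHcl : H ∈ closure ((StarAlgebra.adjoin ℂ (Set.range (cc (n := n))) :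
        StarSubalgebra ℂ C(XX n, ℂ)) : Set C(XX n, ℂ)) := by
      rw [closure_adjoin_eq_univ]; trivial
    have himg : T '' ((StarAlgebra.adjoin ℂ (Set.range (cc (n := n))) :
        StarSubalgebra ℂ C(XX n, ℂ)) : Set C(XX n, ℂ))
        ⊆ ((Submodule.span ℂ (Set.range E)).topologicalClosure : Set _) := by
      rintro _ ⟨x, hx, rfl⟩
      exact hTspan x (adjoin_le_span hx)
    have hmem : T H ∈ closure (T '' ((StarAlgebra.adjoin ℂ (Set.range (cc (n := n))) :
        StarSubalgebra ℂ C(XX n, ℂ)) : Set C(XX n, ℂ))) :=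
      image_closure_subset_closure_image hTcont (Set.mem_image_of_mem T hHcl)
    have hfin := closure_mono himg hmem
    rwa [IsClosed.closure_eq (Submodule.isClosed_topologicalClosure _)] at hfin
  -- conclude by density of compactly supported continuous functions
  rw [Submodule.eq_top_iff']
  intro F
  have hSclosed : IsClosed ((Submodule.span ℂ (Set.range E)).topologicalClosure :
      Set (Lp ℂ 1 (volume.restrict {t : Fin n → ℝ | ∀ i, 0 ≤ t i}))) :=
    Submodule.isClosed_topologicalClosure _
  rw [show (F ∈ (Submodule.span ℂ (Set.range E)).topologicalClosure) ↔
      F ∈ ((Submodule.span ℂ (Set.range E)).topologicalClosure : Set _) from Iff.rfl,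
    ← hSclosed.closure_eq, Metric.mem_closure_iff]
  intro ε hε
  haveI : IsLocallyFiniteMeasure
      (volume.restrict {t : Fin n → ℝ | ∀ i, 0 ≤ t i}) :=
    Measure.isLocallyFiniteMeasure_of_le Measure.restrict_le_self
  obtain ⟨g, hgs, hgle, hgc, hgm⟩ :=
    (Lp.memLp F).exists_hasCompactSupport_eLpNorm_sub_le (p := 1)
      ENNReal.one_ne_top (ε := ENNReal.ofReal (ε/2))
      (by simp only [ne_eq, ENNReal.ofReal_eq_zero, not_le]; linarith)
  obtain ⟨H, hH⟩ := exists_H a b ha hb hgc hgs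
  refine ⟨T H, hTall H, ?_⟩
  have hTHg : T H = hgm.toLp g := by
    rw [hTdef]
    apply MemLp.toLp_congr
    filter_upwards [hae] with t ht
    exact hH t ht
  rw [hTHg, dist_eq_norm]
  have hFsub : F - hgm.toLp g = ((Lp.memLp F).sub hgm).toLp (⇑F - g) := by
    conv_lhs => rw [← MeasureTheory.Lp.toLp_coeFn F (Lp.memLp F)]
    exact (MemLp.toLp_sub _ _).symm
  rw [hFsub, MeasureTheory.Lp.norm_toLp]
  calc (eLpNorm (⇑F - g) 1 (volume.restrict {t : Fin n → ℝ | ∀ i, 0 ≤ t i})).toReal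
      ≤ (ENNReal.ofReal (ε/2)).toReal :=
        ENNReal.toReal_mono ENNReal.ofReal_ne_top hgle
    _ = ε / 2 := ENNReal.toReal_ofReal (by linarith)
    _ < ε := by linarith

end
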